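/- Let C be an 𝔽_q-linear MRD-code of 𝔽_q-linear maps 𝔽_{q^n} → 𝔽_q^t with t ≥ n, minimum distance n - 1, whose right idealiser equals {τ_α : α ∈ 𝔽_{q^n}} (scalar multiplications of 𝔽_{q^n}), and let r = dim of C as a right 𝔽_{q^n}-space. Then the subset U = {f ∈ C : f(1) = 0} is a scattered 𝔽_q-subspace of the r-dimensional right 𝔽_{q^n}-vector space C. -/
import Mathlib


/-- from an MRD-code with parameters `(t, n, q; n-1)` and right idealiser
`{τ_α : α ∈ 𝔽_{q^n}}`, the set `U = {f ∈ C : f 1 = 0}` is a scattered `𝔽_q`-subspace of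
the right `𝔽_{q^n}`-vector space `C`. -/
theorem scattered_from_MRD
    (q n t : ℕ) (hn : 2 ≤ n) (htn : n ≤ t)
    (Fq K : Type*) [Field Fq] [Field K] [Fintype Fq] [Fintype K] [Algebra Fq K]
    (hq : Fintype.card Fq = q) (hK : Fintype.card K = q ^ n)
    (C : Submodule Fq (K →ₗ[Fq] (Fin t → Fq)))
    (hidealiser : {φ : K →ₗ[Fq] K | ∀ f ∈ C, f ∘ₗ φ ∈ C}
        = Set.range (fun α : K => (Algebra.lmul Fq K).toLinearMap α))
    (hmin : ∀ f ∈ C, f ≠ 0 → Module.finrank Fq (LinearMap.ker f) ≤ 1)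
    (hMRD : Set.ncard (C : Set (K →ₗ[Fq] (Fin t → Fq))) = q ^ (2 * t))
    (U : Submodule Fq (K →ₗ[Fq] (Fin t → Fq)))
    (hU : (U : Set (K →ₗ[Fq] (Fin t → Fq))) = {f | f ∈ C ∧ f 1 = 0}) :
    ∀ f ∈ U, f ≠ 0 →
      Module.finrank Fq
        ↥(U ⊓ LinearMap.range
            ((LinearMap.llcomp Fq K K (Fin t → Fq) f) ∘ₗ
              (Algebra.lmul Fq K).toLinearMap)) = 1 := by
  intro f hfU hf0
  haveI : FiniteDimensional Fq K := Module.Finite.of_finite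
  have hfC : f ∈ C ∧ f 1 = 0 := by
    have h : f ∈ (U : Set (K →ₗ[Fq] (Fin t → Fq))) := hfU
    rw [hU] at h
    exact h
  -- kernel of f is exactly the span of 1
  have hle : Submodule.span Fq ({1} : Set K) ≤ LinearMap.ker f := by
    rw [Submodule.span_le, Set.singleton_subset_iff]
    exact hfC.2
  have hker : LinearMap.ker f = Submodule.span Fq ({1} : Set K) := by
    refine (Submodule.eq_of_le_of_finrank_le hle ?_).symm
    have h1 : Module.finrank Fq (Submodule.span Fq ({1} : Set K)) = 1 :=
      finrank_span_singleton (one_ne_zero)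
    rw [h1]
    exact hmin f hfC.1 hf0
  have hmain : U ⊓ LinearMap.range
      ((LinearMap.llcomp Fq K K (Fin t → Fq) f) ∘ₗ
        (Algebra.lmul Fq K).toLinearMap) = Submodule.span Fq {f} := by
    apply le_antisymm
    · rintro g ⟨hgU, α, rfl⟩
      have hg1 : f α = 0 := by
        have h : _ ∈ (U : Set (K →ₗ[Fq] (Fin t → Fq))) := hgU
        rw [hU] at h
        simpa using h.2
      have hα : α ∈ Submodule.span Fq ({1} : Set K) := by
        rw [← hker]; exact hg1
      obtain ⟨c, hc⟩ := Submodule.mem_span_singleton.mp hα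
      rw [Submodule.mem_span_singleton]
      refine ⟨c, ?_⟩
      ext x i
      have hx : α * x = c • x := by rw [← hc, Algebra.smul_def, Algebra.smul_def, mul_assoc, one_mul]
      show c * f x i = f (α * x) i
      rw [hx, map_smul]
      rfl
    · rw [Submodule.span_le, Set.singleton_subset_iff]
      refine ⟨hfU, 1, ?_⟩
      ext x
      simp
  rw [hmain]
  exact finrank_span_singleton hf0
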